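/- Let K be an even positive integer and let G be a K-edge-connected finite simple graph. Let ℓ ≥ 3 and let Z_1, ..., Z_{ℓ-1} be pairwise disjoint nonempty vertex sets with W = Z_1 ∪ ... ∪ Z_{ℓ-1} ≠ V(G), such that: each ∂Z_i is a K-cut; ∂W is a K-cut; G has no edges between Z_i and Z_j whenever 1 ≤ i, j ≤ ℓ-1 and |i - j| ≥ 2; |∂Z_i ∩ ∂Z_{i+1}| = K/2 for each i = 1, ..., ℓ-2; and |∂Z_1 ∩ ∂W| = K/2 and |∂Z_{ℓ-1} ∩ ∂W| = K/2. Suppose w_2, w_3, ..., w_ℓ is a path in G (consecutive vertices adjacent in G) with w_2 ∈ Z_2 ∩ H̃(Z_1) ∩ H̃(Z_2), w_i ∈ Z_i ∩ H̃(Z_i) for i = 3, ..., ℓ-1, and w_ℓ ∈ V(∂W) ∖ W. Then both w_{ℓ-1} and w_ℓ are hubs for W, that is, w_{ℓ-1}, w_ℓ ∈ H̃(W). -/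

import Mathlib

open SimpleGraph

variable {V : Type*}

/-- The cut `∂X`: the set of edges of `G` with exactly one endpoint in `X`. -/
def cutEdges (G : SimpleGraph V) (X : Set V) : Set (Sym2 V) :=
  {e | e ∈ G.edgeSet ∧ ∃ u v, e = s(u, v) ∧ u ∈ X ∧ v ∉ X}

/-- `G` is `K`-edge-connected: at least two vertices, connected, and every cut has
at least `K` edges. -/
def KEdgeConnected (G : SimpleGraph V) (K : ℕ) : Prop :=
  Nontrivial V ∧ G.Connected ∧
    ∀ X : Set V, X.Nonempty → X ≠ Set.univ → K ≤ (cutEdges G X).ncard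

/-- `∂X` is a `K`-cut. -/
def IsKCut (G : SimpleGraph V) (K : ℕ) (X : Set V) : Prop :=
  X.Nonempty ∧ X ≠ Set.univ ∧ (cutEdges G X).ncard = K

/-- The cuts `∂X` and `∂Y` cross. -/
def Crossing (X Y : Set V) : Prop :=
  (X ∩ Y).Nonempty ∧ (X ∩ Yᶜ).Nonempty ∧ (Xᶜ ∩ Y).Nonempty ∧ (Xᶜ ∩ Yᶜ).Nonempty

/-- The set of vertices reachable from `u` in `T` after deleting the edge `e`;
for a spanning tree `T` and an edge `e` of `T` with endpoint `u`, this is the shore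
of the cut induced by `e` containing `u`. -/
def treeSide (T : SimpleGraph V) (u : V) (e : Sym2 V) : Set V :=
  {x | (T.deleteEdges {e}).Reachable u x}

/-- The congestion of the edge `(u,v)` of a spanning tree `T` of `G`. -/
noncomputable def edgeCong (G T : SimpleGraph V) (u v : V) : ℕ :=
  (cutEdges G (treeSide T u s(u, v))).ncard

/-- The spanning tree `T` of `G` has congestion at most `K`. -/
def CongAtMost (G T : SimpleGraph V) (K : ℕ) : Prop :=
  ∀ u v, T.Adj u v → edgeCong G T u v ≤ K

/-- The congestion of a spanning tree `T` of `G`. -/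
noncomputable def treeCongestion (G T : SimpleGraph V) : ℕ :=
  sSup {n | ∃ u v, T.Adj u v ∧ n = edgeCong G T u v}

/-- The spanning-tree congestion of `G`. -/
noncomputable def stc (G : SimpleGraph V) : ℕ :=
  sInf {n | ∃ T : SimpleGraph V, T ≤ G ∧ T.IsTree ∧ treeCongestion G T = n}

/-- `T_out(w,e)`: the vertex set of the component of the tree `H − e` not containing `w`
(the vertices of `H` that are no longer reachable from `w` after deleting `e`). -/
def treeOut (G : SimpleGraph V) (H : G.Subgraph) (w : V) (e : Sym2 V) : Set V :=
  {x ∈ H.verts | ¬ (H.deleteEdges {e}).spanningCoe.Reachable w x}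

/-- The rooted tree `(H, w)` is safe (with parameter `K`). -/
def SafeTree (G : SimpleGraph V) (K : ℕ) (H : G.Subgraph) (w : V) : Prop :=
  ∀ e ∈ H.edgeSet, (cutEdges G (treeOut G H w e)).ncard = K

/-- `V(∂X)`: the set of endpoints of edges of the cut `∂X`. -/
def cutVerts (G : SimpleGraph V) (X : Set V) : Set V :=
  {v | ∃ e ∈ cutEdges G X, v ∈ e}

/-- `w` is a hub for `Z`: `w ∈ V(∂Z)` and there is a spanning tree `H` of the subgraph
of `G` induced by `Z ∪ {w}` such that `(H, w)` is a safe tree. -/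
def IsHub (G : SimpleGraph V) (K : ℕ) (Z : Set V) (w : V) : Prop :=
  w ∈ cutVerts G Z ∧
    ∃ H : G.Subgraph, H.verts = Z ∪ {w} ∧ H.coe.IsTree ∧ SafeTree G K H w

/-- `H̃(Z)`: the set of all hubs for `Z`. -/
def hubSet (G : SimpleGraph V) (K : ℕ) (Z : Set V) : Set V :=
  {w | IsHub G K Z w}

/-- `N(S)`: the set of vertices adjacent in `G` to some vertex of `S`. -/
def nbrSet (G : SimpleGraph V) (S : Set V) : Set V :=
  {v | ∃ u ∈ S, G.Adj u v}

/-- Edges of `∂X` with both endpoints in `S`. -/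
def cutRestrict (G : SimpleGraph V) (X S : Set V) : Set (Sym2 V) :=
  {e ∈ cutEdges G X | ∀ v ∈ e, v ∈ S}


section AuxHelpers

variable {V : Type*} {G : SimpleGraph V}

lemma aux_walk_closed {X : SimpleGraph V} {S : Set V}
    (hcl : ∀ x ∈ S, ∀ y, X.Adj x y → y ∈ S) {a b : V} (p : X.Walk a b) (ha : a ∈ S) :
    b ∈ S := by
  induction p with
  | nil => exact ha
  | cons h _ ih => exact ih (hcl _ ha _ h)

lemma aux_reach_closed {X : SimpleGraph V} {S : Set V}
    (hcl : ∀ x ∈ S, ∀ y, X.Adj x y → y ∈ S) {a b : V} (h : X.Reachable a b) (ha : a ∈ S) :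
    b ∈ S := by
  obtain ⟨p⟩ := h
  exact aux_walk_closed hcl p ha

lemma aux_reachable_deleteEdges_or {X : SimpleGraph V} {a b x y : V}
    (h : X.Reachable a b) :
    (X.deleteEdges {s(x, y)}).Reachable a b ∨ (X.deleteEdges {s(x, y)}).Reachable a x ∨
      (X.deleteEdges {s(x, y)}).Reachable a y := by
  obtain ⟨p⟩ := h
  induction p with
  | nil => exact Or.inl (Reachable.refl _)
  | @cons u c d h p ih =>
    by_cases he : s(u, c) = s(x, y)
    · rw [Sym2.eq_iff] at he
      rcases he with ⟨rfl, rfl⟩ | ⟨rfl, rfl⟩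
      · exact Or.inr (Or.inl (Reachable.refl _))
      · exact Or.inr (Or.inr (Reachable.refl _))
    · have hadj : (X.deleteEdges {s(x, y)}).Adj u c := by
        rw [SimpleGraph.deleteEdges_adj]
        exact ⟨h, by simp [he]⟩
      rcases ih with h' | h' | h'
      · exact Or.inl (hadj.reachable.trans h')
      · exact Or.inr (Or.inl (hadj.reachable.trans h'))
      · exact Or.inr (Or.inr (hadj.reachable.trans h'))

lemma aux_coe_reach_spanning {H : G.Subgraph} {x y : H.verts}
    (h : H.coe.Reachable x y) : H.spanningCoe.Reachable x.val y.val :=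
  h.map ⟨Subtype.val, fun hadj => hadj⟩

/-- spanningCoe-walk between vertices lifts to coe. -/
lemma aux_spanning_reach_coe {A : G.Subgraph} {x y : V}
    (h : A.spanningCoe.Reachable x y) (hx : x ∈ A.verts) (hy : y ∈ A.verts) :
    A.coe.Reachable ⟨x, hx⟩ ⟨y, hy⟩ := by
  obtain ⟨p⟩ := h
  induction p with
  | nil => exact Reachable.refl _
  | @cons u c d h p ih =>
    have hc : c ∈ A.verts := A.edge_vert (h : A.Adj u c).symm
    exact ((h : A.Adj u c).coe).reachable.trans (ih hc hy)

lemma aux_mono_del {A H : G.Subgraph} (hAH : A ≤ H) (e : Sym2 V) :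
    (A.deleteEdges {e}).spanningCoe ≤ (H.deleteEdges {e}).spanningCoe := by
  intro x y hxy
  have hxy' : (A.deleteEdges {e}).Adj x y := hxy
  rw [Subgraph.deleteEdges_adj] at hxy'
  show (H.deleteEdges {e}).Adj x y
  rw [Subgraph.deleteEdges_adj]
  exact ⟨hAH.2 hxy'.1, hxy'.2⟩

lemma aux_mono_nodel {A H : G.Subgraph} (hAH : A ≤ H) {e : Sym2 V}
    (he : e ∉ A.edgeSet) : A.spanningCoe ≤ (H.deleteEdges {e}).spanningCoe := by
  intro x y hxy
  show (H.deleteEdges {e}).Adj x y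
  rw [Subgraph.deleteEdges_adj]
  refine ⟨hAH.2 (hxy : A.Adj x y), fun hc => he ?_⟩
  rw [Set.mem_singleton_iff] at hc
  rw [← hc]
  exact (Subgraph.mem_edgeSet).2 hxy

lemma aux_edge_not_mem_of_inter_subsingleton {A B : G.Subgraph}
    (h : (A.verts ∩ B.verts).Subsingleton) {e : Sym2 V} (he : e ∈ A.edgeSet) :
    e ∉ B.edgeSet := by
  induction e with
  | h u v =>
    intro hb
    rw [Subgraph.mem_edgeSet] at he hb
    exact he.ne (h ⟨A.edge_vert he, B.edge_vert hb⟩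
      ⟨A.edge_vert he.symm, B.edge_vert hb.symm⟩)

/-- A separation certificate for `treeOut`. -/
def AuxSep (G : SimpleGraph V) (H : G.Subgraph) (r : V) (e : Sym2 V) (S : Set V) : Prop :=
  S ⊆ H.verts ∧ r ∉ S ∧
    (∀ x ∈ S, ∀ y, H.Adj x y → s(x, y) ≠ e → y ∈ S) ∧
    (∀ x ∈ H.verts, x ∉ S → ((H.deleteEdges {e}).spanningCoe).Reachable r x)

lemma AuxSep.closed' {H : G.Subgraph} {r : V} {e : Sym2 V} {S : Set V}
    (hS : AuxSep G H r e S) :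
    ∀ x ∈ S, ∀ y, ((H.deleteEdges {e}).spanningCoe).Adj x y → y ∈ S := by
  intro x hx y hxy
  have hxy' : (H.deleteEdges {e}).Adj x y := hxy
  rw [Subgraph.deleteEdges_adj] at hxy'
  exact hS.2.2.1 x hx y hxy'.1 (by simpa using hxy'.2)

lemma AuxSep.not_reachable {H : G.Subgraph} {r : V} {e : Sym2 V} {S : Set V}
    (hS : AuxSep G H r e S) {a b : V} (ha : a ∈ S) (hb : b ∉ S) :
    ¬ ((H.deleteEdges {e}).spanningCoe).Reachable a b :=
  fun h => hb (aux_reach_closed hS.closed' h ha)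

lemma AuxSep.treeOut_eq {H : G.Subgraph} {r : V} {e : Sym2 V} {S : Set V}
    (hS : AuxSep G H r e S) : treeOut G H r e = S := by
  ext x
  constructor
  · rintro ⟨hxv, hxr⟩
    by_contra hxS
    exact hxr (hS.2.2.2 x hxv hxS)
  · intro hxS
    refine ⟨hS.1 hxS, fun hr => hS.2.1 ?_⟩
    exact aux_reach_closed hS.closed' hr.symm hxS

/-- in a tree subgraph, deleting an edge separates its endpoints, with exactly one
endpoint on the far side from any root. -/
lemma aux_treeOut_endpoint_split {H : G.Subgraph} (ht : H.coe.IsTree) {r : V}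
    (hr : r ∈ H.verts) {e : Sym2 V} (he : e ∈ H.edgeSet) :
    ∃ a b, e = s(a, b) ∧ a ∈ treeOut G H r e ∧ b ∉ treeOut G H r e := by
  induction e with
  | h u v =>
    rw [Subgraph.mem_edgeSet] at he
    have hu : u ∈ H.verts := H.edge_vert he
    have hv : v ∈ H.verts := H.edge_vert he.symm
    -- r reaches at least one endpoint after deletion
    have hru : H.spanningCoe.Reachable r u :=
      aux_coe_reach_spanning (ht.isConnected.preconnected ⟨r, hr⟩ ⟨u, hu⟩)
    have h1 : ((H.deleteEdges {s(u, v)}).spanningCoe).Reachable r u ∨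
        ((H.deleteEdges {s(u, v)}).spanningCoe).Reachable r v := by
      have := aux_reachable_deleteEdges_or (x := u) (y := v) hru
      rw [Subgraph.deleteEdges_spanningCoe_eq] at this
      tauto
    -- not both endpoints reachable
    have h2 : ¬ (((H.deleteEdges {s(u, v)}).spanningCoe).Reachable r u ∧
        ((H.deleteEdges {s(u, v)}).spanningCoe).Reachable r v) := by
      rintro ⟨hu', hv'⟩
      have hreach : ((H.deleteEdges {s(u, v)}).spanningCoe).Reachable u v := hu'.symm.trans hv'
      have hcoe : ((H.deleteEdges {s(u, v)}).coe).Reachable ⟨u, hu⟩ ⟨v, hv⟩ :=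
        aux_spanning_reach_coe hreach hu hv
      rw [Subgraph.coe_deleteEdges_eq] at hcoe
      have hbr : H.coe.IsBridge s(⟨u, hu⟩, ⟨v, hv⟩) :=
        (isAcyclic_iff_forall_adj_isBridge.1 ht.IsAcyclic) (he.coe)
      rw [isBridge_iff] at hbr
      refine hbr (hcoe.mono ?_)
      intro a b hab
      replace hab := (SimpleGraph.deleteEdges_adj (G := H.coe) (v := (a : H.verts)) (w := (b : H.verts))).1 hab
      have : s(a, b) ≠ s((⟨u, hu⟩ : H.verts), (⟨v, hv⟩ : H.verts)) := by
        intro hc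
        apply hab.2
        simp only [Set.mem_preimage, Set.mem_singleton_iff, hc, Sym2.map_pair_eq]
        exact rfl
      exact (SimpleGraph.deleteEdges_adj (G := H.coe) (v := (a : H.verts)) (w := (b : H.verts))).2 ⟨hab.1, fun h1' => this (Set.mem_singleton_iff.1 h1')⟩
    rcases h1 with h' | h'
    · refine ⟨v, u, Sym2.eq_swap.symm, ⟨hv, fun hc => h2 ⟨h', hc⟩⟩, fun hc => hc.2 h'⟩
    · refine ⟨u, v, rfl, ⟨hu, fun hc => h2 ⟨hc, h'⟩⟩, fun hc => hc.2 h'⟩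

/-- transfer a coe-minus-an-edge walk to spanningCoe-minus. -/
lemma aux_coe_minus_reach {H : G.Subgraph} {a b : H.verts}
    (h : (H.coe \ fromEdgeSet {s(a, b)}).Reachable a b) :
    ((H.deleteEdges {s(a.val, b.val)}).spanningCoe).Reachable a.val b.val := by
  refine h.map ⟨Subtype.val, ?_⟩
  rintro p q hpq
  rw [SimpleGraph.sdiff_adj] at hpq
  obtain ⟨h1, h2⟩ := hpq
  have hne : s(p, q) ≠ s(a, b) := fun hc => h2 (by rw [fromEdgeSet_adj]; exact ⟨hc, h1.ne⟩)
  show (H.deleteEdges {s(a.val, b.val)}).Adj p.val q.val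
  rw [Subgraph.deleteEdges_adj]
  refine ⟨h1, fun hc => hne ?_⟩
  rw [Set.mem_singleton_iff] at hc
  have := Sym2.map.injective (Subtype.val_injective (p := fun x => x ∈ H.verts)) (a₁ := s(p, q)) (a₂ := s(a, b)) ?_
  · exact this
  · rw [Sym2.map_pair_eq, Sym2.map_pair_eq]; exact hc

/-- endpoints of a cut edge, relative to a given representation. -/
lemma aux_cut_split {X : Set V} {e : Sym2 V} (he : e ∈ cutEdges G X) {a b : V}
    (hab : e = s(a, b)) : (a ∈ X ∧ b ∉ X) ∨ (b ∈ X ∧ a ∉ X) := by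
  obtain ⟨-, u, v, huv, hu, hv⟩ := he
  rw [hab, Sym2.eq_iff] at huv
  rcases huv with ⟨rfl, rfl⟩ | ⟨rfl, rfl⟩
  · exact Or.inl ⟨hu, hv⟩
  · exact Or.inr ⟨hu, hv⟩

lemma aux_cut_inter {X Y : Set V} (hXY : Disjoint X Y) {e : Sym2 V}
    (he : e ∈ cutEdges G X ∩ cutEdges G Y) :
    ∃ u v, e = s(u, v) ∧ u ∈ X ∧ v ∈ Y ∧ G.Adj u v := by
  obtain ⟨hG', u, v, rfl, hu, hv⟩ := he.1
  have := aux_cut_split he.2 (a := u) (b := v) rfl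
  rcases this with ⟨h1, _⟩ | ⟨h1, _⟩
  · exact absurd h1 (fun h => (hXY.ne_of_mem hu h) rfl)
  · exact ⟨u, v, rfl, hu, h1, (SimpleGraph.mem_edgeSet G).1 he.1.1⟩

end AuxHelpers

/-- (Back spines yield hubs for the cycle cut `W`, `K` even.) -/
theorem back_spine_gives_cycle_hubs {V : Type*} [Fintype V] (K : ℕ) (hKpos : 0 < K)
    (hKeven : Even K) (G : SimpleGraph V) (hG : KEdgeConnected G K)
    (ℓ : ℕ) (hℓ : 3 ≤ ℓ) (Z : ℕ → Set V) (W : Set V)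
    (hW : W = ⋃ i ∈ Finset.Icc 1 (ℓ - 1), Z i)
    (hWne : W ≠ Set.univ)
    (hdisj : ∀ i j, 1 ≤ i → i < j → j ≤ ℓ - 1 → Disjoint (Z i) (Z j))
    (hne : ∀ i, 1 ≤ i → i ≤ ℓ - 1 → (Z i).Nonempty)
    (hcuts : ∀ i, 1 ≤ i → i ≤ ℓ - 1 → IsKCut G K (Z i))
    (hcutW : IsKCut G K W)
    (hnoedge : ∀ i j, 1 ≤ i → i + 2 ≤ j → j ≤ ℓ - 1 →
      ∀ u ∈ Z i, ∀ v ∈ Z j, ¬ G.Adj u v)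
    (hhalf : ∀ i, 1 ≤ i → i ≤ ℓ - 2 →
      (cutEdges G (Z i) ∩ cutEdges G (Z (i + 1))).ncard = K / 2)
    (hhalf1 : (cutEdges G (Z 1) ∩ cutEdges G W).ncard = K / 2)
    (hhalfl : (cutEdges G (Z (ℓ - 1)) ∩ cutEdges G W).ncard = K / 2)
    (w : ℕ → V)
    (hpath : ∀ i, 2 ≤ i → i < ℓ → G.Adj (w i) (w (i + 1)))
    (hw2 : w 2 ∈ Z 2 ∧ w 2 ∈ hubSet G K (Z 1) ∧ w 2 ∈ hubSet G K (Z 2))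
    (hwi : ∀ i, 3 ≤ i → i ≤ ℓ - 1 → w i ∈ Z i ∧ w i ∈ hubSet G K (Z i))
    (hwl : w ℓ ∈ cutVerts G W \ W) :
    w (ℓ - 1) ∈ hubSet G K W ∧ w ℓ ∈ hubSet G K W := by
  classical
  obtain ⟨k0, rfl⟩ : ∃ k0, ℓ = k0 + 3 := ⟨ℓ - 3, by omega⟩
  have e1 : k0 + 3 - 1 = k0 + 2 := by omega
  have e2 : k0 + 3 - 2 = k0 + 1 := by omega
  rw [e1] at hW hdisj hne hcuts hnoedge hhalfl hwi
  rw [e1]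
  rw [e2] at hhalf
  obtain ⟨hw2Z, hw2h1, hw2h2⟩ := hw2
  have hKhalf : K / 2 + K / 2 = K := by
    obtain ⟨t, rfl⟩ := hKeven; omega
  have hfin : ∀ s : Set (Sym2 V), s.Finite := fun s => Set.toFinite s
  set P : ℕ → Set V := fun i => ⋃ j ∈ Finset.Icc 1 i, Z j with hPdef
  have hPmem : ∀ i x, x ∈ P i ↔ ∃ j, 1 ≤ j ∧ j ≤ i ∧ x ∈ Z j := by
    intro i x
    simp only [hPdef, Set.mem_iUnion, Finset.mem_Icc, exists_prop, and_assoc]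
  have hWP : W = P (k0 + 2) := hW
  have hZsubW : ∀ j, 1 ≤ j → j ≤ k0 + 2 → Z j ⊆ W := by
    intro j h1 h2 x hx
    rw [hWP]; exact (hPmem _ _).2 ⟨j, h1, h2, hx⟩
  have hwZ : ∀ a, 2 ≤ a → a ≤ k0 + 2 → w a ∈ Z a := by
    intro a h1 h2
    rcases Nat.lt_or_ge a 3 with h | h
    · have ha : a = 2 := by omega
      subst ha; exact hw2Z
    · exact (hwi a h h2).1
  have hwhub : ∀ a, 2 ≤ a → a ≤ k0 + 2 → IsHub G K (Z a) (w a) := by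
    intro a h1 h2
    rcases Nat.lt_or_ge a 3 with h | h
    · have ha : a = 2 := by omega
      subst ha; exact hw2h2
    · exact (hwi a h h2).2
  have hwlW : w (k0 + 3) ∉ W := hwl.2
  have hdisj' : ∀ i j, 1 ≤ i → i ≤ k0 + 2 → 1 ≤ j → j ≤ k0 + 2 → i ≠ j →
      Disjoint (Z i) (Z j) := by
    intro i j h1 h2 h3 h4 h5
    rcases Nat.lt_or_ge i j with h | h
    · exact hdisj i j h1 h h4
    · exact (hdisj j i h3 (by omega) h2).symm
  have hZmem : ∀ x i j, 1 ≤ i → i ≤ k0 + 2 → 1 ≤ j → j ≤ k0 + 2 → x ∈ Z i → x ∈ Z j →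
      i = j := by
    intro x i j h1 h2 h3 h4 hxi hxj
    by_contra h5
    exact (hdisj' i j h1 h2 h3 h4 h5).ne_of_mem hxi hxj rfl
  have hwmem : ∀ a j, 2 ≤ a → a ≤ k0 + 3 → 1 ≤ j → j ≤ k0 + 2 → w a ∈ Z j → a = j := by
    intro a j h1 h2 h3 h4 hx
    rcases Nat.lt_or_ge a (k0 + 3) with h | h
    · exact hZmem _ a j (by omega) (by omega) h3 h4 (hwZ a h1 (by omega)) hx
    · have ha : a = k0 + 3 := by omega
      subst ha
      exact absurd (hZsubW j h3 h4 hx) hwlW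
  have hwne : ∀ a b, 2 ≤ a → a ≤ k0 + 3 → 2 ≤ b → b ≤ k0 + 3 → w a = w b → a = b := by
    intro a b h1 h2 h3 h4 h5
    rcases Nat.lt_or_ge b (k0 + 3) with h | h
    · exact hwmem a b h1 h2 (by omega) (by omega) (h5 ▸ hwZ b h3 (by omega))
    · rcases Nat.lt_or_ge a (k0 + 3) with h' | h'
      · have hb : b = k0 + 3 := by omega
        subst hb
        exact absurd (h5 ▸ hZsubW a (by omega) (by omega) (hwZ a h1 (by omega))) hwlW
      · omega
  -- hub trees
  obtain ⟨-, T1, hT1v, hT1t, hT1s⟩ := hw2h1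
  have hexT : ∀ j, ∃ H : G.Subgraph, 2 ≤ j → j ≤ k0 + 2 →
      H.verts = Z j ∧ H.coe.IsTree ∧ SafeTree G K H (w j) := by
    intro j
    by_cases h : 2 ≤ j ∧ j ≤ k0 + 2
    · obtain ⟨-, H, h1, h2, h3⟩ := hwhub j h.1 h.2
      refine ⟨H, fun _ _ => ⟨?_, h2, h3⟩⟩
      rw [h1]
      exact Set.union_eq_left.2 (Set.singleton_subset_iff.2 (hwZ j h.1 h.2))
    · exact ⟨⊥, fun h1 h2 => absurd ⟨h1, h2⟩ h⟩
  choose T hT using hexT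
  have hexE : ∀ j, ∃ Ej : G.Subgraph, 2 ≤ j → j ≤ k0 + 2 →
      Ej.verts = {w j, w (j + 1)} ∧ (∀ x y, Ej.Adj x y ↔ s(x, y) = s(w j, w (j + 1))) ∧
        Ej.edgeSet = {s(w j, w (j + 1))} ∧ Ej.Connected := by
    intro j
    by_cases h : 2 ≤ j ∧ j ≤ k0 + 2
    · have hadj : G.Adj (w j) (w (j + 1)) := hpath j h.1 (by omega)
      exact ⟨G.subgraphOfAdj hadj, fun _ _ => ⟨rfl, fun x y => eq_comm,
        G.edgeSet_subgraphOfAdj hadj, Subgraph.subgraphOfAdj_connected hadj⟩⟩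
    · exact ⟨⊥, fun h1 h2 => absurd ⟨h1, h2⟩ h⟩
  choose E hE using hexE
  -- the chain of glued trees
  set gg : ℕ → G.Subgraph :=
    fun k => Nat.rec (T1 ⊔ T 2) (fun k ih => ih ⊔ E (k + 2) ⊔ T (k + 3)) k with hggdef
  have hgg0 : gg 0 = T1 ⊔ T 2 := rfl
  have hggs : ∀ k, gg (k + 1) = gg k ⊔ E (k + 2) ⊔ T (k + 3) := fun k => rfl
  have hZsubP : ∀ j i, 1 ≤ j → j ≤ i → Z j ⊆ P i := by
    intro j i h1 h2 x hx
    exact (hPmem _ _).2 ⟨j, h1, h2, hx⟩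
  have hPmono : ∀ i j, i ≤ j → P i ⊆ P j := by
    intro i j hij x hx
    obtain ⟨a, h1, h2, h3⟩ := (hPmem _ _).1 hx
    exact (hPmem _ _).2 ⟨a, h1, by omega, h3⟩
  -- verts of gg
  have hvg : ∀ k, k + 2 ≤ k0 + 2 → (gg k).verts = P (k + 2) := by
    intro k
    induction k with
    | zero =>
      intro h
      rw [hgg0, Subgraph.verts_sup, hT1v, (hT 2 (by omega) (by omega)).1]
      ext x
      simp only [Set.mem_union, Set.mem_singleton_iff, hPmem]
      constructor
      · rintro ((hx | rfl) | hx)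
        · exact ⟨1, by omega, by omega, hx⟩
        · exact ⟨2, by omega, by omega, hw2Z⟩
        · exact ⟨2, by omega, by omega, hx⟩
      · rintro ⟨j, h1, h2, h3⟩
        rcases Nat.lt_or_ge j 2 with h' | h'
        · exact Or.inl (Or.inl ((by omega : j = 1) ▸ h3))
        · exact Or.inr ((by omega : j = 2) ▸ h3)
    | succ k ih =>
      intro h
      rw [hggs, Subgraph.verts_sup, Subgraph.verts_sup, ih (by omega),
        (hE (k + 2) (by omega) (by omega)).1, (hT (k + 3) (by omega) (by omega)).1]
      ext x
      simp only [Set.mem_union, Set.mem_insert_iff, Set.mem_singleton_iff, hPmem]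
      constructor
      · rintro ((⟨j, h1, h2, h3⟩ | (rfl | rfl)) | hx)
        · exact ⟨j, h1, by omega, h3⟩
        · exact ⟨k + 2, by omega, by omega, hwZ (k + 2) (by omega) (by omega)⟩
        · exact ⟨k + 3, by omega, by omega, hwZ (k + 3) (by omega) (by omega)⟩
        · exact ⟨k + 3, by omega, by omega, hx⟩
      · rintro ⟨j, h1, h2, h3⟩
        rcases Nat.lt_or_ge j (k + 3) with h' | h'
        · exact Or.inl (Or.inl ⟨j, h1, by omega, h3⟩)
        · exact Or.inr ((by omega : j = k + 3) ▸ h3)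
  -- adjacency characterization
  have hadjg : ∀ k, ∀ x y, (gg k).Adj x y ↔
      (T1.Adj x y ∨ ∃ j, 2 ≤ j ∧ j ≤ k + 2 ∧ (T j).Adj x y) ∨
        ∃ j, 2 ≤ j ∧ j + 1 ≤ k + 2 ∧ (E j).Adj x y := by
    intro k
    induction k with
    | zero =>
      intro x y
      rw [hgg0, Subgraph.sup_adj]
      constructor
      · rintro (h | h)
        · exact Or.inl (Or.inl h)
        · exact Or.inl (Or.inr ⟨2, by omega, by omega, h⟩)
      · rintro ((h | ⟨j, h1, h2, h⟩) | ⟨j, h1, h2, h⟩)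
        · exact Or.inl h
        · have : j = 2 := by omega
          subst this; exact Or.inr h
        · exact absurd h2 (by omega)
    | succ k ih =>
      intro x y
      rw [hggs, Subgraph.sup_adj, Subgraph.sup_adj, ih]
      constructor
      · rintro ((((h | ⟨j, h1, h2, h⟩) | ⟨j, h1, h2, h⟩) | h) | h)
        · exact Or.inl (Or.inl h)
        · exact Or.inl (Or.inr ⟨j, h1, by omega, h⟩)
        · exact Or.inr ⟨j, h1, by omega, h⟩
        · exact Or.inr ⟨k + 2, by omega, by omega, h⟩
        · exact Or.inl (Or.inr ⟨k + 3, by omega, by omega, h⟩)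
      · rintro ((h | ⟨j, h1, h2, h⟩) | ⟨j, h1, h2, h⟩)
        · exact Or.inl (Or.inl (Or.inl (Or.inl h)))
        · rcases Nat.lt_or_ge j (k + 3) with h' | h'
          · exact Or.inl (Or.inl (Or.inl (Or.inr ⟨j, h1, by omega, h⟩)))
          · have : j = k + 3 := by omega
            subst this; exact Or.inr h
        · rcases Nat.lt_or_ge j (k + 2) with h' | h'
          · exact Or.inl (Or.inl (Or.inr ⟨j, h1, by omega, h⟩))
          · have : j = k + 2 := by omega
            subst this; exact Or.inl (Or.inr h)
  -- inclusions
  have hleg : ∀ k, (T1 ≤ gg k) ∧ (∀ j, 2 ≤ j → j ≤ k + 2 → T j ≤ gg k) ∧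
      (∀ j, 2 ≤ j → j + 1 ≤ k + 2 → E j ≤ gg k) := by
    intro k
    induction k with
    | zero =>
      refine ⟨le_sup_left, fun j h1 h2 => ?_, fun j h1 h2 => by omega⟩
      have : j = 2 := by omega
      subst this; exact le_sup_right
    | succ k ih =>
      rw [hggs]
      refine ⟨le_trans ih.1 (le_trans le_sup_left le_sup_left), fun j h1 h2 => ?_,
        fun j h1 h2 => ?_⟩
      · rcases Nat.lt_or_ge j (k + 3) with h' | h'
        · exact le_trans (ih.2.1 j h1 (by omega)) (le_trans le_sup_left le_sup_left)
        · have : j = k + 3 := by omega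
          subst this; exact le_sup_right
      · rcases Nat.lt_or_ge j (k + 2) with h' | h'
        · exact le_trans (ih.2.2 j h1 (by omega)) (le_trans le_sup_left le_sup_left)
        · have : j = k + 2 := by omega
          subst this; exact le_trans le_sup_right le_sup_left
  -- connectivity
  have hcg : ∀ k, k + 2 ≤ k0 + 2 → (gg k).Connected := by
    intro k
    induction k with
    | zero =>
      intro h
      rw [hgg0]
      refine Subgraph.connected_sup (Subgraph.Connected.preconnected ⟨hT1t.isConnected⟩) (Subgraph.Connected.preconnected ⟨(hT 2 (by omega) (by omega)).2.1.isConnected⟩) ?_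
      refine ⟨w 2, ?_⟩
      rw [Subgraph.verts_inf, hT1v, (hT 2 (by omega) (by omega)).1]
      exact ⟨Or.inr rfl, hw2Z⟩
    | succ k ih =>
      intro h
      rw [hggs]
      refine Subgraph.connected_sup (Subgraph.Connected.preconnected (Subgraph.connected_sup (Subgraph.Connected.preconnected (ih (by omega)))
        (Subgraph.Connected.preconnected ((hE (k + 2) (by omega) (by omega)).2.2.2)) ?_))
        (Subgraph.Connected.preconnected ⟨(hT (k + 3) (by omega) (by omega)).2.1.isConnected⟩) ?_
      · refine ⟨w (k + 2), ?_⟩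
        rw [Subgraph.verts_inf, hvg k (by omega), (hE (k + 2) (by omega) (by omega)).1]
        exact ⟨hZsubP (k + 2) (k + 2) (by omega) le_rfl (hwZ (k + 2) (by omega) (by omega)),
          Or.inl rfl⟩
      · refine ⟨w (k + 3), ?_⟩
        rw [Subgraph.verts_inf, Subgraph.verts_sup, (hE (k + 2) (by omega) (by omega)).1,
          (hT (k + 3) (by omega) (by omega)).1]
        exact ⟨Or.inr (Or.inr rfl), hwZ (k + 3) (by omega) (by omega)⟩
  -- edge membership characterization
  have hedg : ∀ k, k + 2 ≤ k0 + 2 → ∀ e, e ∈ (gg k).edgeSet ↔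
      (e ∈ T1.edgeSet ∨ ∃ j, 2 ≤ j ∧ j ≤ k + 2 ∧ e ∈ (T j).edgeSet) ∨
        ∃ j, 2 ≤ j ∧ j + 1 ≤ k + 2 ∧ e = s(w j, w (j + 1)) := by
    intro k hk e
    induction e with
    | h x y =>
      rw [Subgraph.mem_edgeSet, hadjg k]
      constructor
      · rintro ((h | ⟨j, h1, h2, h⟩) | ⟨j, h1, h2, h⟩)
        · exact Or.inl (Or.inl (Subgraph.mem_edgeSet.2 h))
        · exact Or.inl (Or.inr ⟨j, h1, h2, Subgraph.mem_edgeSet.2 h⟩)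
        · exact Or.inr ⟨j, h1, h2, ((hE j h1 (by omega)).2.1 x y).1 h⟩
      · rintro ((h | ⟨j, h1, h2, h⟩) | ⟨j, h1, h2, h⟩)
        · exact Or.inl (Or.inl (Subgraph.mem_edgeSet.1 h))
        · exact Or.inl (Or.inr ⟨j, h1, h2, Subgraph.mem_edgeSet.1 h⟩)
        · exact Or.inr ⟨j, h1, h2, ((hE j h1 (by omega)).2.1 x y).2 h⟩
  -- vertex-intersection facts
  have hT1inter : ∀ j, 2 ≤ j → j ≤ k0 + 2 → (T1.verts ∩ (T j).verts).Subsingleton := by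
    intro j h1 h2 x hx y hy
    rw [hT1v, (hT j h1 h2).1] at hx hy
    have hx2 : x = w 2 := by
      rcases hx.1 with h | h
      · exact absurd (hZmem x 1 j (by omega) (by omega) (by omega) h2 h hx.2) (by omega)
      · exact h
    have hy2 : y = w 2 := by
      rcases hy.1 with h | h
      · exact absurd (hZmem y 1 j (by omega) (by omega) (by omega) h2 h hy.2) (by omega)
      · exact h
    rw [hx2, hy2]
  have hTinter : ∀ j j', 2 ≤ j → j ≤ k0 + 2 → 2 ≤ j' → j' ≤ k0 + 2 → j ≠ j' →
      ((T j).verts ∩ (T j').verts).Subsingleton := by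
    intro j j' h1 h2 h3 h4 h5 x hx y hy
    rw [(hT j h1 h2).1, (hT j' h3 h4).1] at hx
    exact absurd (hZmem x j j' (by omega) h2 (by omega) h4 hx.1 hx.2) h5
  have echainT : ∀ a, 2 ≤ a → a ≤ k0 + 2 → ∀ j, 2 ≤ j → j ≤ k0 + 2 →
      s(w a, w (a + 1)) ∉ (T j).edgeSet := by
    intro a h1 h2 j h3 h4 hmem
    have hv1 : w a ∈ (T j).verts :=
      Subgraph.mem_verts_of_mem_edge hmem (Sym2.mem_mk_left _ _)
    have hv2 : w (a + 1) ∈ (T j).verts :=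
      Subgraph.mem_verts_of_mem_edge hmem (Sym2.mem_mk_right _ _)
    rw [(hT j h3 h4).1] at hv1 hv2
    have ha : a = j := hwmem a j h1 (by omega) (by omega) h4 hv1
    have hb : a + 1 = j := hwmem (a + 1) j (by omega) (by omega) (by omega) h4 hv2
    omega
  have echainT1 : ∀ a, 2 ≤ a → a ≤ k0 + 2 → s(w a, w (a + 1)) ∉ T1.edgeSet := by
    intro a h1 h2 hmem
    have hv1 : w a ∈ T1.verts :=
      Subgraph.mem_verts_of_mem_edge hmem (Sym2.mem_mk_left _ _)
    have hv2 : w (a + 1) ∈ T1.verts :=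
      Subgraph.mem_verts_of_mem_edge hmem (Sym2.mem_mk_right _ _)
    rw [hT1v] at hv1 hv2
    have ha : a = 2 := by
      rcases hv1 with h | h
      · exact absurd (hwmem a 1 h1 (by omega) (by omega) (by omega) h) (by omega)
      · exact hwne a 2 h1 (by omega) (by omega) (by omega) h
    subst ha
    rcases hv2 with h | h
    · exact absurd (hwmem 3 1 (by omega) (by omega) (by omega) (by omega) h) (by omega)
    · exact absurd (hwne 3 2 (by omega) (by omega) (by omega) (by omega) h) (by omega)
  -- reachability in the trees
  have treeReach : ∀ j, 2 ≤ j → j ≤ k0 + 2 → ∀ x ∈ (T j).verts,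
      (T j).spanningCoe.Reachable (w j) x := by
    intro j h1 h2 x hx
    have hwv : w j ∈ (T j).verts := by
      rw [(hT j h1 h2).1]; exact hwZ j h1 h2
    exact aux_coe_reach_spanning
      ((hT j h1 h2).2.1.isConnected.preconnected ⟨w j, hwv⟩ ⟨x, hx⟩)
  have treeReach1 : ∀ x ∈ T1.verts, T1.spanningCoe.Reachable (w 2) x := by
    intro x hx
    have hwv : w 2 ∈ T1.verts := by rw [hT1v]; exact Or.inr rfl
    exact aux_coe_reach_spanning (hT1t.isConnected.preconnected ⟨w 2, hwv⟩ ⟨x, hx⟩)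
  -- chain reachability in gg k0
  have chainR : ∀ (e : Sym2 V) (t : ℕ), 2 ≤ t →
      (∀ a, t ≤ a → a + 1 ≤ k0 + 2 → s(w a, w (a + 1)) ≠ e) →
      ∀ b, t ≤ b → b ≤ k0 + 2 →
        (((gg k0).deleteEdges {e}).spanningCoe).Reachable (w (k0 + 2)) (w b) := by
    intro e t ht hsurv
    have key : ∀ d b, t ≤ b → b + d = k0 + 2 →
        (((gg k0).deleteEdges {e}).spanningCoe).Reachable (w b) (w (k0 + 2)) := by
      intro d
      induction d with
      | zero =>
        intro b hb hbd
        rw [show b = k0 + 2 by omega]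
      | succ d ih =>
        intro b hb hbd
        have hadj : (((gg k0).deleteEdges {e}).spanningCoe).Adj (w b) (w (b + 1)) := by
          show ((gg k0).deleteEdges {e}).Adj (w b) (w (b + 1))
          rw [Subgraph.deleteEdges_adj]
          refine ⟨((hleg k0).2.2 b (by omega) (by omega)).2 ?_,
            by simpa using hsurv b hb (by omega)⟩
          exact ((hE b (by omega) (by omega)).2.1 _ _).2 rfl
        exact hadj.reachable.trans (ih (b + 1) (by omega) (by omega))
    intro b hb1 hb2
    exact (key (k0 + 2 - b) b hb1 (by omega)).symm
  have reachZj : ∀ (e : Sym2 V), (∀ a, 2 ≤ a → a + 1 ≤ k0 + 2 → s(w a, w (a + 1)) ≠ e) →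
      ∀ j', 2 ≤ j' → j' ≤ k0 + 2 → e ∉ (T j').edgeSet → ∀ x ∈ Z j',
        (((gg k0).deleteEdges {e}).spanningCoe).Reachable (w (k0 + 2)) x := by
    intro e hsurv j' h1 h2 he x hx
    refine (chainR e 2 le_rfl hsurv j' h1 h2).trans ?_
    have hx' : x ∈ (T j').verts := by rw [(hT j' h1 h2).1]; exact hx
    exact (treeReach j' h1 h2 x hx').mono
      (aux_mono_nodel ((hleg k0).2.1 j' h1 h2) he)
  have reachZ1 : ∀ (e : Sym2 V), (∀ a, 2 ≤ a → a + 1 ≤ k0 + 2 → s(w a, w (a + 1)) ≠ e) →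
      e ∉ T1.edgeSet → ∀ x ∈ Z 1,
        (((gg k0).deleteEdges {e}).spanningCoe).Reachable (w (k0 + 2)) x := by
    intro e hsurv he x hx
    refine (chainR e 2 le_rfl hsurv 2 le_rfl (by omega)).trans ?_
    have hx' : x ∈ T1.verts := by rw [hT1v]; exact Or.inl hx
    exact (treeReach1 x hx').mono (aux_mono_nodel (hleg k0).1 he)
  -- cut counting
  have hKK : (cutEdges G W).ncard = K := hcutW.2.2
  have noout : ∀ i, 1 ≤ i → i + 2 ≤ k0 + 2 → ∀ u v, G.Adj u v → u ∈ Z (i + 1) → v ∉ W →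
      False := by
    intro i h1 h2 u v hadj hu hv
    have he1 : s(u, v) ∈ cutEdges G (Z (i + 1)) :=
      ⟨G.mem_edgeSet.2 hadj, u, v, rfl, hu, fun hc => hv (hZsubW (i + 1) (by omega) (by omega) hc)⟩
    have hd1 : Disjoint (Z i) (Z (i + 1)) := hdisj' i (i + 1) h1 (by omega) (by omega) (by omega) (by omega)
    have hd2 : Disjoint (Z (i + 1)) (Z (i + 2)) :=
      hdisj' (i + 1) (i + 2) (by omega) (by omega) (by omega) (by omega) (by omega)
    have hdj : Disjoint (cutEdges G (Z i) ∩ cutEdges G (Z (i + 1)))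
        (cutEdges G (Z (i + 1)) ∩ cutEdges G (Z (i + 2))) := by
      rw [Set.disjoint_left]
      intro e hp1 hp2
      obtain ⟨a, b, rfl, ha, hb, -⟩ := aux_cut_inter hd1 hp1
      obtain ⟨c, d, hcd, hc, hd, -⟩ := aux_cut_inter hd2 hp2
      rw [Sym2.eq_iff] at hcd
      rcases hcd with ⟨rfl, rfl⟩ | ⟨rfl, rfl⟩
      · exact absurd (hZmem a i (i + 1) h1 (by omega) (by omega) (by omega) ha hc) (by omega)
      · exact absurd (hZmem a i (i + 2) h1 (by omega) (by omega) (by omega) ha hd) (by omega)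
    have hsub : (cutEdges G (Z i) ∩ cutEdges G (Z (i + 1))) ∪
        (cutEdges G (Z (i + 1)) ∩ cutEdges G (Z (i + 2))) ⊆ cutEdges G (Z (i + 1)) := by
      rintro e (he | he)
      · exact he.2
      · exact he.1
    have heq : (cutEdges G (Z i) ∩ cutEdges G (Z (i + 1))) ∪
        (cutEdges G (Z (i + 1)) ∩ cutEdges G (Z (i + 2))) = cutEdges G (Z (i + 1)) := by
      refine Set.eq_of_subset_of_ncard_le hsub ?_ (hfin _)
      rw [(hcuts (i + 1) (by omega) (by omega)).2.2,
        Set.ncard_union_eq hdj (hfin _) (hfin _),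
        hhalf i h1 (by omega), hhalf (i + 1) (by omega) (by omega), hKhalf]
    rw [← heq] at he1
    rcases he1 with he | he
    · obtain ⟨a, b, hab, ha, hb, -⟩ := aux_cut_inter hd1 he
      rw [Sym2.eq_iff] at hab
      rcases hab with ⟨rfl, rfl⟩ | ⟨rfl, rfl⟩
      · exact absurd (hZmem u i (i + 1) h1 (by omega) (by omega) (by omega) ha hu) (by omega)
      · exact hv (hZsubW i h1 (by omega) ha)
    · obtain ⟨a, b, hab, ha, hb, -⟩ := aux_cut_inter hd2 he
      rw [Sym2.eq_iff] at hab
      rcases hab with ⟨rfl, rfl⟩ | ⟨rfl, rfl⟩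
      · exact hv (hZsubW (i + 2) (by omega) (by omega) hb)
      · exact hv (hZsubW (i + 1) (by omega) (by omega) ha)
  have pcut : ∀ j, 2 ≤ j → j + 1 ≤ k0 + 2 → (cutEdges G (P j)).ncard = K := by
    intro j hj1 hj2
    have hdZ : Disjoint (Z j) (Z (j + 1)) :=
      hdisj' j (j + 1) (by omega) (by omega) (by omega) (by omega) (by omega)
    have heq : cutEdges G (P j) =
        (cutEdges G (Z j) ∩ cutEdges G (Z (j + 1))) ∪ (cutEdges G (Z 1) ∩ cutEdges G W) := by
      ext e
      constructor
      · rintro ⟨heG, u, v, rfl, hu, hv⟩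
        obtain ⟨i, hi1, hi2, hui⟩ := (hPmem j u).1 hu
        have hadj : G.Adj u v := G.mem_edgeSet.1 heG
        by_cases hvW : v ∈ W
        · obtain ⟨i', hi'1, hi'2, hvi'⟩ := (hPmem (k0 + 2) v).1 (hWP ▸ hvW)
          have hii' : i' ≤ i + 1 := by
            by_contra hgt
            exact hnoedge i i' hi1 (by omega) hi'2 u hui v hvi' hadj
          have hi'j : j + 1 ≤ i' := by
            by_contra hlt
            exact hv ((hPmem j v).2 ⟨i', hi'1, by omega, hvi'⟩)
          have hij1 : i = j := by omega
          have hij2 : i' = j + 1 := by omega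
          subst hij1; subst hij2
          refine Or.inl ⟨⟨heG, u, v, rfl, hui, fun hc => hdZ.ne_of_mem hc hvi' rfl⟩,
            ⟨heG, v, u, Sym2.eq_swap, hvi', fun hc => hdZ.ne_of_mem hui hc rfl⟩⟩
        · rcases Nat.lt_or_ge i 2 with hi | hi
          · have : i = 1 := by omega
            subst this
            exact Or.inr ⟨⟨heG, u, v, rfl, hui, fun hc => hvW (hZsubW 1 (by omega) (by omega) hc)⟩,
              ⟨heG, u, v, rfl, hZsubW 1 (by omega) (by omega) hui, hvW⟩⟩
          · obtain ⟨i0, rfl⟩ : ∃ i0, i = i0 + 1 := ⟨i - 1, by omega⟩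
            exact absurd (noout i0 (by omega) (by omega) u v hadj hui hvW) id
      · rintro (he | he)
        · obtain ⟨u, v, rfl, hu, hv, hadj⟩ := aux_cut_inter hdZ he
          refine ⟨G.mem_edgeSet.2 hadj, u, v, rfl, hZsubP j j (by omega) le_rfl hu, fun hc => ?_⟩
          obtain ⟨i, hi1, hi2, hvi⟩ := (hPmem j v).1 hc
          exact absurd (hZmem v i (j + 1) hi1 (by omega) (by omega) (by omega) hvi hv) (by omega)
        · obtain ⟨heG, u, v, huv, hu, hv⟩ := he.1
          have hsplit := aux_cut_split he.2 huv
          have hvW : v ∉ W := by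
            rcases hsplit with ⟨h1, h2⟩ | ⟨h1, h2⟩
            · exact h2
            · exact absurd (hZsubW 1 (by omega) (by omega) hu) h2
          refine ⟨heG, u, v, huv, hZsubP 1 j (by omega) (by omega) hu, fun hc => ?_⟩
          obtain ⟨i, hi1, hi2, hvi⟩ := (hPmem j v).1 hc
          exact hvW (hZsubW i hi1 (by omega) hvi)
    have hdj : Disjoint (cutEdges G (Z j) ∩ cutEdges G (Z (j + 1)))
        (cutEdges G (Z 1) ∩ cutEdges G W) := by
      rw [Set.disjoint_left]
      intro e hp1 hp2
      obtain ⟨a, b, rfl, ha, hb, -⟩ := aux_cut_inter hdZ hp1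
      obtain ⟨-, c, d, hcd, hc, -⟩ := hp2.1
      rw [Sym2.eq_iff] at hcd
      rcases hcd with ⟨rfl, rfl⟩ | ⟨rfl, rfl⟩
      · exact absurd (hZmem a j 1 (by omega) (by omega) (by omega) (by omega) ha hc) (by omega)
      · exact absurd (hZmem b (j + 1) 1 (by omega) (by omega) (by omega) (by omega) hb hc) (by omega)
    rw [heq, Set.ncard_union_eq hdj (hfin _) (hfin _), hhalf j (by omega) (by omega), hhalf1,
      hKhalf]
  -- the master separation statement for gg k0
  have caseTj : ∀ j, 2 ≤ j → j ≤ k0 + 2 → ∀ e ∈ (T j).edgeSet, ∃ S : Set V,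
      S ⊆ P (k0 + 2) ∧
      (∀ x ∈ S, ∀ y, (gg k0).Adj x y → s(x, y) ≠ e → y ∈ S) ∧
      (∀ x ∈ P (k0 + 2), x ∉ S →
        (((gg k0).deleteEdges {e}).spanningCoe).Reachable (w (k0 + 2)) x) ∧
      w (k0 + 2) ∉ S ∧
      (∃ a b, e = s(a, b) ∧ a ∈ S ∧ b ∉ S) ∧
      (cutEdges G S).ncard = K := by
    intro j hj1 hj2 e he
    set S := treeOut G (T j) (w j) e with hSdef
    have hTj := hT j hj1 hj2
    have hwjS : w j ∉ S := fun hc => hc.2 (Reachable.refl _)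
    have hSsub : S ⊆ Z j := fun x hx => hTj.1 ▸ hx.1
    have hchain : ∀ a, 2 ≤ a → a + 1 ≤ k0 + 2 → s(w a, w (a + 1)) ≠ e :=
      fun a h1 h2 hc => echainT a h1 (by omega) j hj1 hj2 (by rw [hc]; exact he)
    have hreachj : ∀ x ∈ (T j).verts, x ∉ S →
        ((T j).deleteEdges {e}).spanningCoe.Reachable (w j) x := by
      intro x hx hxS
      by_contra hc
      exact hxS ⟨hx, hc⟩
    refine ⟨S, fun x hx => hZsubP j (k0 + 2) (by omega) hj2 (hSsub hx), ?_, ?_, ?_, ?_,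
      hTj.2.2 e he⟩
    · intro x hx y hadj hne
      rcases (hadjg k0 x y).1 hadj with (h | ⟨j', h1, h2, h⟩) | ⟨j', h1, h2, h⟩
      · have hxv : x ∈ T1.verts := T1.edge_vert h
        rw [hT1v] at hxv
        rcases hxv with hx1 | hx2
        · exact absurd (hZmem x 1 j (by omega) (by omega) (by omega) hj2 hx1 (hSsub hx)) (by omega)
        · subst hx2
          have h2j : 2 = j := hwmem 2 j (by omega) (by omega) (by omega) hj2 (hSsub hx)
          exact absurd (h2j ▸ hx) hwjS
      · have hxv : x ∈ (T j').verts := (T j').edge_vert h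
        rw [(hT j' h1 h2).1] at hxv
        have hj'j : j' = j := hZmem x j' j (by omega) h2 (by omega) hj2 hxv (hSsub hx)
        subst hj'j
        have hyv : y ∈ (T j').verts := (T j').edge_vert h.symm
        by_contra hyS
        have hry := hreachj y hyv hyS
        have hadj2 : ((T j').deleteEdges {e}).spanningCoe.Adj y x := by
          show ((T j').deleteEdges {e}).Adj y x
          rw [Subgraph.deleteEdges_adj]
          exact ⟨h.symm, fun hc => hne (by rwa [Set.mem_singleton_iff, Sym2.eq_swap] at hc)⟩
        exact hx.2 (hry.trans hadj2.reachable)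
      · have hxy := ((hE j' h1 (by omega)).2.1 x y).1 h
        rw [Sym2.eq_iff] at hxy
        rcases hxy with ⟨hx1, -⟩ | ⟨hx1, -⟩
        · subst hx1
          have hj'j : j' = j := hwmem j' j h1 (by omega) (by omega) hj2 (hSsub hx)
          exact absurd (hj'j ▸ hx) hwjS
        · subst hx1
          have hj'j : j' + 1 = j := hwmem (j' + 1) j (by omega) (by omega) (by omega) hj2 (hSsub hx)
          exact absurd (hj'j ▸ hx) hwjS
    · intro x hxP hxS
      obtain ⟨i, hi1, hi2, hxi⟩ := (hPmem _ _).1 hxP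
      rcases Nat.lt_or_ge i 2 with hi | hi
      · have hi1' : i = 1 := by omega
        subst hi1'
        exact reachZ1 e hchain (aux_edge_not_mem_of_inter_subsingleton
          (by rw [Set.inter_comm]; exact hT1inter j hj1 hj2) he) x hxi
      · by_cases hij : i = j
        · subst hij
          have hx' : x ∈ (T i).verts := by rw [(hT i hi hi2).1]; exact hxi
          refine (chainR e 2 le_rfl hchain i hi hi2).trans ?_
          exact (hreachj x hx' hxS).mono (aux_mono_del ((hleg k0).2.1 i hi hi2) e)
        · exact reachZj e hchain i hi hi2 (aux_edge_not_mem_of_inter_subsingleton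
            (hTinter j i hj1 hj2 hi hi2 (fun hc => hij hc.symm)) he) x hxi
    · intro hc
      have hkj : k0 + 2 = j := hwmem (k0 + 2) j (by omega) (by omega) (by omega) hj2 (hSsub hc)
      exact hwjS (hkj ▸ hc)
    · have hwv : w j ∈ (T j).verts := by rw [hTj.1]; exact hwZ j hj1 hj2
      exact aux_treeOut_endpoint_split hTj.2.1 hwv he
  have caseT1 : ∀ e ∈ T1.edgeSet, ∃ S : Set V,
      S ⊆ P (k0 + 2) ∧
      (∀ x ∈ S, ∀ y, (gg k0).Adj x y → s(x, y) ≠ e → y ∈ S) ∧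
      (∀ x ∈ P (k0 + 2), x ∉ S →
        (((gg k0).deleteEdges {e}).spanningCoe).Reachable (w (k0 + 2)) x) ∧
      w (k0 + 2) ∉ S ∧
      (∃ a b, e = s(a, b) ∧ a ∈ S ∧ b ∉ S) ∧
      (cutEdges G S).ncard = K := by
    intro e he
    set S := treeOut G T1 (w 2) e with hSdef
    have hw2S : w 2 ∉ S := fun hc => hc.2 (Reachable.refl _)
    have hSsub : S ⊆ Z 1 := by
      intro x hx
      have hxv := hx.1
      rw [hT1v] at hxv
      rcases hxv with h | h
      · exact h
      · exact absurd (h ▸ hx) hw2S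
    have hchain : ∀ a, 2 ≤ a → a + 1 ≤ k0 + 2 → s(w a, w (a + 1)) ≠ e :=
      fun a h1 h2 hc => echainT1 a h1 (by omega) (by rw [hc]; exact he)
    have hreach1 : ∀ x ∈ T1.verts, x ∉ S →
        (T1.deleteEdges {e}).spanningCoe.Reachable (w 2) x := by
      intro x hx hxS
      by_contra hc
      exact hxS ⟨hx, hc⟩
    refine ⟨S, fun x hx => hZsubP 1 (k0 + 2) le_rfl (by omega) (hSsub hx), ?_, ?_, ?_, ?_,
      hT1s e he⟩
    · intro x hx y hadj hne
      rcases (hadjg k0 x y).1 hadj with (h | ⟨j', h1, h2, h⟩) | ⟨j', h1, h2, h⟩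
      · have hyv : y ∈ T1.verts := T1.edge_vert h.symm
        by_contra hyS
        have hry := hreach1 y hyv hyS
        have hadj2 : (T1.deleteEdges {e}).spanningCoe.Adj y x := by
          show (T1.deleteEdges {e}).Adj y x
          rw [Subgraph.deleteEdges_adj]
          exact ⟨h.symm, fun hc => hne (by rwa [Set.mem_singleton_iff, Sym2.eq_swap] at hc)⟩
        exact hx.2 (hry.trans hadj2.reachable)
      · have hxv : x ∈ (T j').verts := (T j').edge_vert h
        rw [(hT j' h1 h2).1] at hxv
        exact absurd (hZmem x j' 1 (by omega) h2 (by omega) (by omega) hxv (hSsub hx)) (by omega)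
      · have hxy := ((hE j' h1 (by omega)).2.1 x y).1 h
        rw [Sym2.eq_iff] at hxy
        rcases hxy with ⟨hx1, -⟩ | ⟨hx1, -⟩
        · subst hx1
          exact absurd (hwmem j' 1 h1 (by omega) (by omega) (by omega) (hSsub hx)) (by omega)
        · subst hx1
          exact absurd (hwmem (j' + 1) 1 (by omega) (by omega) (by omega) (by omega) (hSsub hx))
            (by omega)
    · intro x hxP hxS
      obtain ⟨i, hi1, hi2, hxi⟩ := (hPmem _ _).1 hxP
      rcases Nat.lt_or_ge i 2 with hi | hi
      · have hi1' : i = 1 := by omega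
        subst hi1'
        have hx' : x ∈ T1.verts := by rw [hT1v]; exact Or.inl hxi
        refine (chainR e 2 le_rfl hchain 2 le_rfl (by omega)).trans ?_
        exact (hreach1 x hx' hxS).mono (aux_mono_del (hleg k0).1 e)
      · exact reachZj e hchain i hi hi2
          (aux_edge_not_mem_of_inter_subsingleton (hT1inter i hi hi2) he) x hxi
    · intro hc
      exact absurd (hwmem (k0 + 2) 1 (by omega) (by omega) (by omega) (by omega) (hSsub hc))
        (by omega)
    · have hwv : w 2 ∈ T1.verts := by rw [hT1v]; exact Or.inr rfl
      exact aux_treeOut_endpoint_split hT1t hwv he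
  have caseE : ∀ j, 2 ≤ j → j + 1 ≤ k0 + 2 → ∃ S : Set V,
      S ⊆ P (k0 + 2) ∧
      (∀ x ∈ S, ∀ y, (gg k0).Adj x y → s(x, y) ≠ s(w j, w (j + 1)) → y ∈ S) ∧
      (∀ x ∈ P (k0 + 2), x ∉ S →
        (((gg k0).deleteEdges {s(w j, w (j + 1))}).spanningCoe).Reachable (w (k0 + 2)) x) ∧
      w (k0 + 2) ∉ S ∧
      (∃ a b, s(w j, w (j + 1)) = s(a, b) ∧ a ∈ S ∧ b ∉ S) ∧
      (cutEdges G S).ncard = K := by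
    intro j hj1 hj2
    refine ⟨P j, hPmono j (k0 + 2) (by omega), ?_, ?_, ?_, ?_, pcut j hj1 hj2⟩
    · intro x hx y hadj hne
      obtain ⟨i, hi1, hi2, hxi⟩ := (hPmem _ _).1 hx
      rcases (hadjg k0 x y).1 hadj with (h | ⟨j', h1, h2, h⟩) | ⟨j', h1, h2, h⟩
      · have hyv : y ∈ T1.verts := T1.edge_vert h.symm
        rw [hT1v] at hyv
        rcases hyv with h' | h'
        · exact hZsubP 1 j (by omega) (by omega) h'
        · rw [h']; exact hZsubP 2 j (by omega) hj1 hw2Z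
      · have hxv : x ∈ (T j').verts := (T j').edge_vert h
        have hyv : y ∈ (T j').verts := (T j').edge_vert h.symm
        rw [(hT j' h1 h2).1] at hxv hyv
        have hj'i : j' = i := hZmem x j' i (by omega) h2 hi1 (by omega) hxv hxi
        exact hZsubP j' j (by omega) (by omega) hyv
      · have hxy := ((hE j' h1 (by omega)).2.1 x y).1 h
        rw [Sym2.eq_iff] at hxy
        rcases hxy with ⟨hx1, hy1⟩ | ⟨hx1, hy1⟩
        · have hj'i : j' = i := hwmem j' i h1 (by omega) hi1 (by omega) (hx1 ▸ hxi)
          by_cases hjj : j' = j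
          · exact absurd (by rw [hx1, hy1, hjj]) hne
          · rw [hy1]
            exact hZsubP (j' + 1) j (by omega) (by omega) (hwZ (j' + 1) (by omega) (by omega))
        · have hj'i : j' + 1 = i := hwmem (j' + 1) i (by omega) (by omega) hi1 (by omega)
            (hx1 ▸ hxi)
          rw [hy1]
          exact hZsubP j' j (by omega) (by omega) (hwZ j' h1 (by omega))
    · intro x hxP hxS
      obtain ⟨i, hi1, hi2, hxi⟩ := (hPmem _ _).1 hxP
      have hij : j + 1 ≤ i := by
        by_contra hlt
        exact hxS ((hPmem _ _).2 ⟨i, hi1, by omega, hxi⟩)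
      have hsurv : ∀ a, j + 1 ≤ a → a + 1 ≤ k0 + 2 → s(w a, w (a + 1)) ≠ s(w j, w (j + 1)) := by
        intro a h1 h2 hc
        rw [Sym2.eq_iff] at hc
        rcases hc with ⟨hc1, -⟩ | ⟨hc1, hc2⟩
        · exact absurd (hwne a j (by omega) (by omega) hj1 (by omega) hc1) (by omega)
        · exact absurd (hwne (a + 1) j (by omega) (by omega) hj1 (by omega) hc2) (by omega)
      refine (chainR _ (j + 1) (by omega) hsurv i (by omega) hi2).trans ?_
      have hx' : x ∈ (T i).verts := by rw [(hT i (by omega) hi2).1]; exact hxi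
      exact (treeReach i (by omega) hi2 x hx').mono
        (aux_mono_nodel ((hleg k0).2.1 i (by omega) hi2)
          (echainT j hj1 (by omega) i (by omega) hi2))
    · intro hc
      obtain ⟨i, hi1, hi2, hxi⟩ := (hPmem _ _).1 hc
      exact absurd (hwmem (k0 + 2) i (by omega) (by omega) hi1 (by omega) hxi) (by omega)
    · refine ⟨w j, w (j + 1), rfl, hZsubP j j (by omega) le_rfl (hwZ j hj1 (by omega)),
        fun hc => ?_⟩
      obtain ⟨i, hi1, hi2, hxi⟩ := (hPmem _ _).1 hc
      exact absurd (hwmem (j + 1) i (by omega) (by omega) hi1 (by omega) hxi) (by omega)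
  have CORE : ∀ e ∈ (gg k0).edgeSet, ∃ S : Set V,
      S ⊆ P (k0 + 2) ∧
      (∀ x ∈ S, ∀ y, (gg k0).Adj x y → s(x, y) ≠ e → y ∈ S) ∧
      (∀ x ∈ P (k0 + 2), x ∉ S →
        (((gg k0).deleteEdges {e}).spanningCoe).Reachable (w (k0 + 2)) x) ∧
      w (k0 + 2) ∉ S ∧
      (∃ a b, e = s(a, b) ∧ a ∈ S ∧ b ∉ S) ∧
      (cutEdges G S).ncard = K := by
    intro e he
    rcases (hedg k0 le_rfl e).1 he with (h | ⟨j, h1, h2, h⟩) | ⟨j, h1, h2, h⟩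
    · exact caseT1 e h
    · exact caseTj j h1 h2 e h
    · obtain rfl := h
      exact caseE j h1 h2
  -- the first hub
  have hwm2W : w (k0 + 2) ∈ W := hZsubW (k0 + 2) (by omega) le_rfl (hwZ (k0 + 2) (by omega) le_rfl)
  have hvg0 : (gg k0).verts = P (k0 + 2) := hvg k0 le_rfl
  have SEPg : ∀ e ∈ (gg k0).edgeSet, ∃ S : Set V, AuxSep G (gg k0) (w (k0 + 2)) e S ∧
      (∃ a b, e = s(a, b) ∧ a ∈ S ∧ b ∉ S) ∧ (cutEdges G S).ncard = K := by
    intro e he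
    obtain ⟨S, h1, h2, h3, h4, h5, h6⟩ := CORE e he
    exact ⟨S, ⟨by rw [hvg0]; exact h1, h4, h2, by rw [hvg0]; exact h3⟩, h5, h6⟩
  have treeg : (gg k0).coe.IsTree := by
    refine ⟨(hcg k0 le_rfl).coe, ?_⟩
    rw [isAcyclic_iff_forall_adj_isBridge]
    intro a b hab
    have habs : (gg k0).Adj a.val b.val := hab
    have he : s(a.val, b.val) ∈ (gg k0).edgeSet := Subgraph.mem_edgeSet.2 habs
    obtain ⟨S, hsep, ⟨p, q, hpq, hp, hq⟩, -⟩ := SEPg _ he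
    rw [isBridge_iff]
    refine fun hr => ?_
    have hr' := aux_coe_minus_reach hr
    rw [Sym2.eq_iff] at hpq
    rcases hpq with ⟨h1, h2⟩ | ⟨h1, h2⟩
    · exact hsep.not_reachable hp hq (h1 ▸ h2 ▸ hr')
    · exact hsep.not_reachable hp hq (h1 ▸ h2 ▸ hr'.symm)
  have safeg : SafeTree G K (gg k0) (w (k0 + 2)) := by
    intro e he
    obtain ⟨S, hsep, -, hK⟩ := SEPg e he
    rw [hsep.treeOut_eq]
    exact hK
  have hub1 : IsHub G K W (w (k0 + 2)) := by
    refine ⟨⟨s(w (k0 + 2), w (k0 + 3)), ⟨G.mem_edgeSet.2 (hpath (k0 + 2) (by omega) (by omega)),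
      w (k0 + 2), w (k0 + 3), rfl, hwm2W, hwlW⟩, Sym2.mem_mk_left _ _⟩, gg k0, ?_, treeg, safeg⟩
    rw [hvg0, ← hWP]
    exact (Set.union_eq_left.2 (Set.singleton_subset_iff.2 hwm2W)).symm
  -- the second hub
  set Hf : G.Subgraph := gg k0 ⊔ E (k0 + 2) with hHfdef
  have hEp := hE (k0 + 2) (by omega) le_rfl
  have hHfv : Hf.verts = W ∪ {w (k0 + 3)} := by
    rw [hHfdef, Subgraph.verts_sup, hvg0, ← hWP, hEp.1]
    ext x
    simp only [Set.mem_union, Set.mem_insert_iff, Set.mem_singleton_iff]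
    constructor
    · rintro (h | (h | h))
      · exact Or.inl h
      · exact Or.inl (h ▸ hwm2W)
      · exact Or.inr h
    · rintro (h | h)
      · exact Or.inl h
      · exact Or.inr (Or.inr h)
  have echainlast : s(w (k0 + 2), w (k0 + 3)) ∉ (gg k0).edgeSet := by
    intro hc
    rcases (hedg k0 le_rfl _).1 hc with (h | ⟨j, h1, h2, h⟩) | ⟨j, h1, h2, h⟩
    · exact echainT1 (k0 + 2) (by omega) le_rfl h
    · exact echainT (k0 + 2) (by omega) le_rfl j h1 h2 h
    · rw [Sym2.eq_iff] at h
      rcases h with ⟨h1', -⟩ | ⟨h1', h2'⟩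
      · exact absurd (hwne (k0 + 2) j (by omega) (by omega) (by omega) (by omega) h1') (by omega)
      · exact absurd (hwne (k0 + 3) j (by omega) (by omega) (by omega) (by omega) h2') (by omega)
  have hHfadj : ∀ x y, Hf.Adj x y ↔ (gg k0).Adj x y ∨ s(x, y) = s(w (k0 + 2), w (k0 + 3)) := by
    intro x y
    rw [hHfdef, Subgraph.sup_adj]
    exact or_congr Iff.rfl (hEp.2.1 x y)
  have SEPf : ∀ e ∈ Hf.edgeSet, ∃ S : Set V, AuxSep G Hf (w (k0 + 3)) e S ∧
      (∃ a b, e = s(a, b) ∧ a ∈ S ∧ b ∉ S) ∧ (cutEdges G S).ncard = K := by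
    intro e he
    rw [hHfdef, Subgraph.edgeSet_sup] at he
    rcases he with he | he
    · obtain ⟨S, h1, h2, h3, h4, h5, h6⟩ := CORE e he
      have hSW : S ⊆ W := by rw [hWP]; exact h1
      refine ⟨S, ⟨?_, fun hc => hwlW (hSW hc), ?_, ?_⟩, h5, h6⟩
      · rw [hHfv]; exact fun x hx => Or.inl (hSW hx)
      · intro x hx y hadj hne
        rcases (hHfadj x y).1 hadj with h | h
        · exact h2 x hx y h hne
        · rw [Sym2.eq_iff] at h
          rcases h with ⟨hx1, -⟩ | ⟨hx1, -⟩
          · exact absurd (hx1 ▸ hx) h4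
          · exact absurd (hx1 ▸ hx) (fun hc => hwlW (hSW hc))
      · intro x hxv hxS
        rw [hHfv] at hxv
        rcases hxv with hxW | hx3
        · have hadj0 : ((Hf.deleteEdges {e}).spanningCoe).Adj (w (k0 + 3)) (w (k0 + 2)) := by
            show (Hf.deleteEdges {e}).Adj _ _
            rw [Subgraph.deleteEdges_adj]
            refine ⟨(hHfadj _ _).2 (Or.inr Sym2.eq_swap), ?_⟩
            intro hc
            rw [Set.mem_singleton_iff, Sym2.eq_swap] at hc
            rw [← hc] at he
            exact echainlast he
          refine hadj0.reachable.trans ?_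
          have hlef : gg k0 ≤ Hf := by rw [hHfdef]; exact le_sup_left
          exact (h3 x (by rwa [← hWP]) hxS).mono (aux_mono_del hlef e)
        · rw [hx3]
    · rw [hEp.2.2.1, Set.mem_singleton_iff] at he
      subst he
      refine ⟨W, ⟨?_, hwlW, ?_, ?_⟩, ⟨w (k0 + 2), w (k0 + 3), rfl, hwm2W, hwlW⟩, hKK⟩
      · rw [hHfv]; exact fun x hx => Or.inl hx
      · intro x hx y hadj hne
        rcases (hHfadj x y).1 hadj with h | h
        · have hy : y ∈ (gg k0).verts := (gg k0).edge_vert h.symm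
          rw [hvg0, ← hWP] at hy
          exact hy
        · exact absurd h hne
      · intro x hxv hxS
        rw [hHfv] at hxv
        rcases hxv with h | h
        · exact absurd h hxS
        · rw [h]
  have conf : Hf.Connected := by
    rw [hHfdef]
    refine Subgraph.connected_sup (Subgraph.Connected.preconnected (hcg k0 le_rfl)) (Subgraph.Connected.preconnected hEp.2.2.2) ?_
    refine ⟨w (k0 + 2), ?_⟩
    rw [Subgraph.verts_inf, hvg0, hEp.1]
    exact ⟨by rw [← hWP]; exact hwm2W, Or.inl rfl⟩
  have treef : Hf.coe.IsTree := by
    refine ⟨conf.coe, ?_⟩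
    rw [isAcyclic_iff_forall_adj_isBridge]
    intro a b hab
    have habs : Hf.Adj a.val b.val := hab
    have he : s(a.val, b.val) ∈ Hf.edgeSet := Subgraph.mem_edgeSet.2 habs
    obtain ⟨S, hsep, ⟨p, q, hpq, hp, hq⟩, -⟩ := SEPf _ he
    rw [isBridge_iff]
    refine fun hr => ?_
    have hr' := aux_coe_minus_reach hr
    rw [Sym2.eq_iff] at hpq
    rcases hpq with ⟨h1, h2⟩ | ⟨h1, h2⟩
    · exact hsep.not_reachable hp hq (h1 ▸ h2 ▸ hr')
    · exact hsep.not_reachable hp hq (h1 ▸ h2 ▸ hr'.symm)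
  have safef : SafeTree G K Hf (w (k0 + 3)) := by
    intro e he
    obtain ⟨S, hsep, -, hK⟩ := SEPf e he
    rw [hsep.treeOut_eq]
    exact hK
  have hub2 : IsHub G K W (w (k0 + 3)) := ⟨hwl.1, Hf, by rw [hHfv], treef, safef⟩
  exact ⟨hub1, hub2⟩
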